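/- Let V be a real vector space of dimension n(k+1), let ω¹,...,ω^k be alternating bilinear forms on V, and let W ⊂ V be a subspace of dimension nk such that ω^α(u,v) = 0 for all u,v ∈ W and all α, and ∩_{α=1}^k ker ω^α = {0}. Then each ker ω^α is contained in W. -/
import Mathlib


/-- In a `k`-symplectic vector space `(V, ω¹,…,ω^k, W)` with `dim V = n(k+1)`,
`dim W = nk`, `ω^α|_{W×W} = 0` and trivial common kernel, each kernel
`ker ω^α` is contained in `W`. -/
theorem ksymplectic_ker_subset_polarisation
    (V : Type*) [AddCommGroup V] [Module ℝ V] [FiniteDimensional ℝ V]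
    (n k : ℕ)
    (hdim : Module.finrank ℝ V = n * (k + 1))
    (ω : Fin k → V →ₗ[ℝ] Module.Dual ℝ V)
    (halt : ∀ (α : Fin k) (v w : V), ω α v w = - ω α w v)
    (W : Submodule ℝ V) (hW : Module.finrank ℝ ↥W = n * k)
    (hiso : ∀ α : Fin k, ∀ u ∈ W, ∀ v ∈ W, ω α u v = 0)
    (hker : (⨅ α : Fin k, LinearMap.ker (ω α)) = ⊥) :
    ∀ α : Fin k, LinearMap.ker (ω α) ≤ W := by
  -- the map θ : W → (V/W)^{*k}
  have hle : ∀ (w : W) (β : Fin k), W ≤ LinearMap.ker (ω β w.1) := by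
    intro w β v hv
    exact hiso β w.1 w.2 v hv
  let θ : W →ₗ[ℝ] (Fin k → Module.Dual ℝ (V ⧸ W)) :=
    { toFun := fun w β => W.liftQ (ω β w.1) (hle w β)
      map_add' := by
        intro w w'
        funext β
        apply Submodule.linearMap_qext
        ext v
        simp
      map_smul' := by
        intro c w
        funext β
        apply Submodule.linearMap_qext
        ext v
        simp }
  have hθ : ∀ (w : W) (β : Fin k) (v : V),
      θ w β (Submodule.Quotient.mk v) = ω β w.1 v := by
    intro w β v
    simp [θ, Submodule.liftQ_apply]
  have hinj : Function.Injective θ := by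
    rw [← LinearMap.ker_eq_bot]
    rw [Submodule.eq_bot_iff]
    intro w hw
    have hw0 : (w : V) ∈ ⨅ α : Fin k, LinearMap.ker (ω α) := by
      rw [Submodule.mem_iInf]
      intro β
      rw [LinearMap.mem_ker]
      ext v
      have := congrFun (LinearMap.mem_ker.mp hw) β
      have h2 := congrArg (fun f => f (Submodule.Quotient.mk v)) this
      simpa [hθ] using h2
    rw [hker] at hw0
    exact Subtype.ext hw0
  -- dimension of quotient
  have hq : Module.finrank ℝ (V ⧸ W) = n := by
    have := Submodule.finrank_quotient_add_finrank W
    rw [hdim, hW] at this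
    have : Module.finrank ℝ (V ⧸ W) + n * k = n * (k + 1) := this
    nlinarith [this]
  have hsurj : Function.Surjective θ := by
    rw [← LinearMap.range_eq_top]
    apply Submodule.eq_top_of_finrank_eq
    rw [LinearMap.finrank_range_of_inj hinj, hW]
    rw [Module.finrank_pi_fintype]
    simp [Subspace.dual_finrank_eq, hq, mul_comm]
  intro α u hu
  by_contra hnW
  have hq0 : (Submodule.Quotient.mk u : V ⧸ W) ≠ 0 := by
    simpa [Submodule.Quotient.mk_eq_zero] using hnW
  obtain ⟨f, hf⟩ : ∃ f : Module.Dual ℝ (V ⧸ W), f (Submodule.Quotient.mk u) ≠ 0 := by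
    by_contra h
    push_neg at h
    exact hq0 ((Module.forall_dual_apply_eq_zero_iff ℝ _).mp h)
  obtain ⟨w, hw⟩ := hsurj (fun β => if β = α then f else 0)
  have h1 : ω α w.1 u = f (Submodule.Quotient.mk u) := by
    have := congrArg (fun g => g α (Submodule.Quotient.mk u)) hw
    simpa [hθ] using this
  have h2 : ω α u w.1 = 0 := by
    rw [LinearMap.mem_ker] at hu
    rw [hu]
    rfl
  rw [halt α w.1 u, h2, neg_zero] at h1
  exact hf h1.symm
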